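/- Let k be a commutative ring, X and Y finite posets, F : Y → J(X) an order-preserving map, y, y' ∈ Y, x ∈ F(y) and x' ∈ F(y'). Then the k-module Hom_{F_{Γ,k}}((i_y)_*(P_x), (i_{y'})_*(P_{x'})) is isomorphic to k if x' ≤ x, y' ≤ y and x ∈ F(y'), and is zero otherwise. -/

import Mathlib

open CategoryTheory
open scoped Classical
namespace PaperInterval
noncomputable def charFunctor (k : Type) [CommRing k] (P : Type) [PartialOrder P] (S : P → Prop)
    (hS : ∀ ⦃x y z : P⦄, x ≤ y → y ≤ z → S x → S z → S y) :
    P ⥤ ModuleCat.{0} k where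
  obj x := ModuleCat.of k (PLift (S x) → k)
  map {x x'} _ := ModuleCat.ofHom
    { toFun := fun g _ => if h : S x then g ⟨h⟩ else 0
      map_add' := by intro g₁ g₂; funext h'; by_cases h : S x <;> simp [h]
      map_smul' := by intro r g; funext h'; by_cases h : S x <;> simp [h] }
  map_id x := by
    apply ModuleCat.hom_ext; apply LinearMap.ext; intro g; funext h'
    by_cases h : S x
    · simp only [ModuleCat.ofHom, LinearMap.coe_mk, AddHom.coe_mk, dif_pos h]; congr 1
    · exact absurd h'.down h
  map_comp {x y z} f g := by
    apply ModuleCat.hom_ext; apply LinearMap.ext; intro u; funext h'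
    by_cases hx : S x
    · have hy : S y := hS (leOfHom f) (leOfHom g) hx h'.down
      simp only [ModuleCat.ofHom, dif_pos hx, dif_pos hy]; rfl
    · by_cases hy : S y <;>
        simp only [ModuleCat.ofHom, dif_neg hx, dif_pos, dif_neg, hy] <;> rfl

noncomputable def Mab (k : Type) [CommRing k] (X : Type) [PartialOrder X] (a b : X) :
    X ⥤ ModuleCat.{0} k :=
  charFunctor k X (fun x => a ≤ x ∧ x ≤ b)
    (fun _ _ _ h1 h2 hx hz => ⟨hx.1.trans h1, h2.trans hz.2⟩)

noncomputable def Pfun (k : Type) [CommRing k] (P : Type) [PartialOrder P] (p : P) :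
    P ⥤ ModuleCat.{0} k :=
  charFunctor k P (fun z => p ≤ z) (fun _ _ _ h1 _ hx _ => hx.trans h1)

noncomputable def Ifun (k : Type) [CommRing k] (P : Type) [PartialOrder P] (p : P) :
    P ⥤ ModuleCat.{0} k :=
  charFunctor k P (fun z => z ≤ p) (fun _ _ _ _ h2 _ hz => h2.trans hz)

variable {X Y : Type} [PartialOrder X] [PartialOrder Y]

/-- The poset `Γ` of generalized intervals attached to an order-preserving map
`F : Y → J(X)`. -/
def Gam (F : Y →o LowerSet X) : Type := {p : X × Y // p.1 ∈ F p.2}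

instance (F : Y →o LowerSet X) : PartialOrder (Gam F) :=
  inferInstanceAs (PartialOrder {p : X × Y // p.1 ∈ F p.2})

/-- The poset `F(y) ⊆ X` (a lower set of `X`), seen as a poset. -/
def FyP (F : Y →o LowerSet X) (y : Y) : Type := {x : X // x ∈ F y}

instance (F : Y →o LowerSet X) (y : Y) : PartialOrder (FyP F y) :=
  inferInstanceAs (PartialOrder {x : X // x ∈ F y})

/-- The order embedding `i_y : F(y) → Γ`, `x ↦ (x, y)`. -/
def iy (F : Y →o LowerSet X) (y : Y) (x : FyP F y) : Gam F := ⟨(x.1, y), x.2⟩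

lemma iy_monotone (F : Y →o LowerSet X) (y : Y) : Monotone (iy F y) :=
  fun _ _ h => ⟨h, le_rfl⟩

/-- `i_y` as a functor. -/
def iyFunctor (F : Y →o LowerSet X) (y : Y) : FyP F y ⥤ Gam F :=
  (iy_monotone F y).functor

/-- The restriction functor `i_y⁻¹ : F_{Γ,k} → F_{F(y),k}` (precomposition with `i_y`). -/
def res (k : Type) [CommRing k] (F : Y →o LowerSet X) (y : Y) :
    (Gam F ⥤ ModuleCat.{0} k) ⥤ (FyP F y ⥤ ModuleCat.{0} k) :=
  (Functor.whiskeringLeft _ _ _).obj (iyFunctor F y)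

lemma mem_of_le (F : Y →o LowerSet X) {p : Gam F} {y : Y} (h : p.1.2 ≤ y) :
    p.1.1 ∈ F y := F.monotone h p.2

/-- The value of the right adjoint `(i_y)⋆` on objects:
`((i_y)⋆ φ)(a,b) = φ(a)` if `b ≤ y` and `0` otherwise. -/
noncomputable def pushObj (k : Type) [CommRing k] (F : Y →o LowerSet X) (y : Y)
    (φ : FyP F y ⥤ ModuleCat.{0} k) : Gam F ⥤ ModuleCat.{0} k where
  obj p := ModuleCat.of k (∀ h : PLift (p.1.2 ≤ y), φ.obj ⟨p.1.1, mem_of_le F h.down⟩)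
  map {p q} f := ModuleCat.ofHom
    { toFun := fun u h =>
        φ.map (homOfLE (show (⟨p.1.1, mem_of_le F ((leOfHom f).2.trans h.down)⟩ : FyP F y) ≤
          ⟨q.1.1, mem_of_le F h.down⟩ from (leOfHom f).1))
          (u ⟨(leOfHom f).2.trans h.down⟩)
      map_add' := by intro u v; funext h; simp
      map_smul' := by intro r u; funext h; simp }
  map_id p := by
    apply ModuleCat.hom_ext; apply LinearMap.ext; intro u; funext h
    have e : ∀ v, φ.map (𝟙 (⟨p.1.1, mem_of_le F h.down⟩ : FyP F y)) v = v := by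
      intro v; exact LinearMap.congr_fun (congrArg ModuleCat.Hom.hom (φ.map_id _)) v
    exact e (u h)
  map_comp {p q r} f g := by
    apply ModuleCat.hom_ext; apply LinearMap.ext; intro u; funext h
    have e := φ.map_comp
      (homOfLE (show (⟨p.1.1, mem_of_le F ((leOfHom f).2.trans ((leOfHom g).2.trans h.down))⟩ : FyP F y) ≤
        ⟨q.1.1, mem_of_le F ((leOfHom g).2.trans h.down)⟩ from (leOfHom f).1))
      (homOfLE (show (⟨q.1.1, mem_of_le F ((leOfHom g).2.trans h.down)⟩ : FyP F y) ≤
        ⟨r.1.1, mem_of_le F h.down⟩ from (leOfHom g).1))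
    exact LinearMap.congr_fun (congrArg ModuleCat.Hom.hom e) (u ⟨(leOfHom f).2.trans ((leOfHom g).2.trans h.down)⟩)



/-- The right adjoint `(i_y)⋆ : F_{F(y),k} → F_{Γ,k}` of the restriction functor. -/
noncomputable def push (k : Type) [CommRing k] (F : Y →o LowerSet X) (y : Y) :
    (FyP F y ⥤ ModuleCat.{0} k) ⥤ (Gam F ⥤ ModuleCat.{0} k) where
  obj φ := pushObj k F y φ
  map {φ ψ} η :=
    { app := fun p => ModuleCat.ofHom
        { toFun := fun u h => η.app ⟨p.1.1, mem_of_le F h.down⟩ (u h)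
          map_add' := by intro u v; funext h; simp
          map_smul' := by intro r u; funext h; simp }
      naturality := by
        intro p q f
        apply ModuleCat.hom_ext; apply LinearMap.ext; intro u; funext h
        exact LinearMap.congr_fun
          (congrArg ModuleCat.Hom.hom (η.naturality (homOfLE (show (⟨p.1.1, mem_of_le F ((leOfHom f).2.trans h.down)⟩ : FyP F y) ≤
            ⟨q.1.1, mem_of_le F h.down⟩ from (leOfHom f).1))))
          (u ⟨(leOfHom f).2.trans h.down⟩) }
  map_id φ := rfl
  map_comp f g := rfl

section Statement7Proof

variable (k : Type) [CommRing k] {X Y : Type} [PartialOrder X] [PartialOrder Y]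
  (F : Y →o LowerSet X)

/-- The canonical generator of `(push k F y).obj (Pfun ...)` at a point. -/
noncomputable def gen (y : Y) (x : X) (hx : x ∈ F y) (p : Gam F) :
    ((push k F y).obj (Pfun k (FyP F y) ⟨x, hx⟩)).obj p := fun _ _ => (1 : k)

lemma obj_subsingleton (y : Y) (x : X) (hx : x ∈ F y) (p : Gam F)
    (h : ¬(x ≤ p.1.1 ∧ p.1.2 ≤ y)) :
    Subsingleton (((push k F y).obj (Pfun k (FyP F y) ⟨x, hx⟩)).obj p) := by
  constructor
  intro u v
  funext h1 h2
  exact absurd ⟨h2.down, h1.down⟩ h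

lemma eq_smul_gen (y : Y) (x : X) (hx : x ∈ F y) (p : Gam F) (hxa : x ≤ p.1.1)
    (hby : p.1.2 ≤ y) (u : ((push k F y).obj (Pfun k (FyP F y) ⟨x, hx⟩)).obj p) :
    u = u ⟨hby⟩ ⟨hxa⟩ • gen k F y x hx p := by
  funext h1 h2
  show u h1 h2 = u ⟨hby⟩ ⟨hxa⟩ * 1
  rw [mul_one]

lemma nat_apply {A B : Gam F ⥤ ModuleCat.{0} k} (η : A ⟶ B) {p q : Gam F} (f : p ⟶ q)
    (u : A.obj p) : η.app q (A.map f u) = B.map f (η.app p u) :=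
  LinearMap.congr_fun (congrArg ModuleCat.Hom.hom (η.naturality f)) u

lemma map_gen (y : Y) (x : X) (hx : x ∈ F y) {p q : Gam F} (f : p ⟶ q) (hxp : x ≤ p.1.1) :
    ((push k F y).obj (Pfun k (FyP F y) ⟨x, hx⟩)).map f (gen k F y x hx p)
      = gen k F y x hx q := by
  funext h1 h2
  show (if hs : (⟨x, hx⟩ : FyP F y) ≤ ⟨p.1.1, mem_of_le F ((leOfHom f).2.trans h1.down)⟩
      then (1 : k) else 0) = 1
  exact dif_pos hxp


/-- Step along `(x, p.2) ⟶ p`: the value of `η` on the generator at `p` equals (when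
`x' ≤ x`) its value on the generator at `(x, p.2)`, and vanishes otherwise. -/
lemma gen_val_step (y y' : Y) (x : X) (hx : x ∈ F y) (x' : X) (hx' : x' ∈ F y')
    (η : ((push k F y).obj (Pfun k (FyP F y) ⟨x, hx⟩)) ⟶
      ((push k F y').obj (Pfun k (FyP F y') ⟨x', hx'⟩)))
    (p : Gam F) (hxa : x ≤ p.1.1) (h1 : PLift (p.1.2 ≤ y'))
    (h2 : PLift ((⟨x', hx'⟩ : FyP F y') ≤ ⟨p.1.1, mem_of_le F h1.down⟩)) :
    η.app p (gen k F y x hx p) h1 h2 =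
      if hs : x' ≤ x then
        η.app ⟨(x, p.1.2), (F p.1.2).lower hxa p.2⟩
          (gen k F y x hx ⟨(x, p.1.2), (F p.1.2).lower hxa p.2⟩) ⟨h1.down⟩ ⟨hs⟩
      else 0 := by
  set r : Gam F := ⟨(x, p.1.2), (F p.1.2).lower hxa p.2⟩ with hr
  have f1 : r ⟶ p := homOfLE ⟨hxa, le_rfl⟩
  have e := nat_apply k F η f1 (gen k F y x hx r)
  rw [map_gen k F y x hx f1 le_rfl] at e
  rw [e]
  show (if hs : (⟨x', hx'⟩ : FyP F y') ≤
      ⟨x, mem_of_le F ((leOfHom f1).2.trans h1.down)⟩ then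
        η.app r (gen k F y x hx r) ⟨(leOfHom f1).2.trans h1.down⟩ ⟨hs⟩ else 0) = _
  by_cases hs : x' ≤ x
  · rw [dif_pos hs, dif_pos (show (⟨x', hx'⟩ : FyP F y') ≤
      ⟨x, mem_of_le F ((leOfHom f1).2.trans h1.down)⟩ from hs)]
  · rw [dif_neg hs, dif_neg (show ¬ (⟨x', hx'⟩ : FyP F y') ≤
      ⟨x, mem_of_le F ((leOfHom f1).2.trans h1.down)⟩ from fun hc => hs hc)]


/-- Step along `(x, b) ⟶ (x, y')`: values of `η` on generators agree. -/
lemma gen_val_to_g (y y' : Y) (x : X) (hx : x ∈ F y) (x' : X) (hx' : x' ∈ F y')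
    (η : ((push k F y).obj (Pfun k (FyP F y) ⟨x, hx⟩)) ⟶
      ((push k F y').obj (Pfun k (FyP F y') ⟨x', hx'⟩)))
    (b : Y) (hbF : x ∈ F b) (hb' : b ≤ y') (hxy' : x ∈ F y') (hxx : x' ≤ x) :
    η.app ⟨(x, b), hbF⟩ (gen k F y x hx ⟨(x, b), hbF⟩) ⟨hb'⟩ ⟨hxx⟩ =
      η.app ⟨(x, y'), hxy'⟩ (gen k F y x hx ⟨(x, y'), hxy'⟩) ⟨le_rfl⟩ ⟨hxx⟩ := by
  set r : Gam F := ⟨(x, b), hbF⟩ with hrr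
  set g : Gam F := ⟨(x, y'), hxy'⟩ with hgg
  have f2 : r ⟶ g := homOfLE ⟨le_rfl, hb'⟩
  have e := nat_apply k F η f2 (gen k F y x hx r)
  rw [map_gen k F y x hx f2 le_rfl] at e
  rw [e]
  show _ = (if hs : (⟨x', hx'⟩ : FyP F y') ≤
      ⟨x, mem_of_le F ((leOfHom f2).2.trans (le_refl y'))⟩ then
        η.app r (gen k F y x hx r) ⟨(leOfHom f2).2.trans (le_refl y')⟩ ⟨hs⟩ else 0)
  rw [dif_pos (show (⟨x', hx'⟩ : FyP F y') ≤
      ⟨x, mem_of_le F ((leOfHom f2).2.trans (le_refl y'))⟩ from hxx)]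


lemma gen_g_zero (y y' : Y) (x : X) (hx : x ∈ F y) (x' : X) (hx' : x' ∈ F y')
    (η : ((push k F y).obj (Pfun k (FyP F y) ⟨x, hx⟩)) ⟶
      ((push k F y').obj (Pfun k (FyP F y') ⟨x', hx'⟩)))
    (hxy' : x ∈ F y') (hny : ¬ y' ≤ y) (h1 : PLift (y' ≤ y'))
    (h2 : PLift ((⟨x', hx'⟩ : FyP F y') ≤
      ⟨x, mem_of_le F (p := ⟨(x, y'), hxy'⟩) h1.down⟩)) :
    η.app ⟨(x, y'), hxy'⟩ (gen k F y x hx ⟨(x, y'), hxy'⟩) h1 h2 = 0 := by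
  have hz : gen k F y x hx ⟨(x, y'), hxy'⟩ = 0 :=
    @Subsingleton.elim _ (obj_subsingleton k F y x hx _ (fun hc => hny hc.2)) _ _
  rw [hz, map_zero]
  rfl

lemma vanish (y y' : Y) (x : X) (hx : x ∈ F y) (x' : X) (hx' : x' ∈ F y')
    (hbad : ¬(x' ≤ x ∧ y' ≤ y ∧ x ∈ F y'))
    (η : ((push k F y).obj (Pfun k (FyP F y) ⟨x, hx⟩)) ⟶
      ((push k F y').obj (Pfun k (FyP F y') ⟨x', hx'⟩)))
    (p : Gam F) (u : ((push k F y).obj (Pfun k (FyP F y) ⟨x, hx⟩)).obj p)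
    (h1 : PLift (p.1.2 ≤ y'))
    (h2 : PLift ((⟨x', hx'⟩ : FyP F y') ≤ ⟨p.1.1, mem_of_le F h1.down⟩)) :
    η.app p u h1 h2 = 0 := by
  by_cases hc : x ≤ p.1.1 ∧ p.1.2 ≤ y
  · obtain ⟨hxa, hby⟩ := hc
    have hxy' : x ∈ F y' :=
      mem_of_le F (p := ⟨(x, p.1.2), (F p.1.2).lower hxa p.2⟩) h1.down
    rw [eq_smul_gen k F y x hx p hxa hby u, map_smul]
    show u ⟨hby⟩ ⟨hxa⟩ * η.app p (gen k F y x hx p) h1 h2 = 0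
    rw [gen_val_step k F y y' x hx x' hx' η p hxa h1 h2]
    by_cases hxx : x' ≤ x
    · rw [dif_pos hxx,
        gen_val_to_g k F y y' x hx x' hx' η p.1.2 ((F p.1.2).lower hxa p.2) h1.down hxy' hxx]
      exact mul_eq_zero_of_right _ (gen_g_zero k F y y' x hx x' hx' η hxy'
        (fun hyy => hbad ⟨hxx, hyy, hxy'⟩) _ _)
    · rw [dif_neg hxx, mul_zero]
  · have hu : u = 0 := @Subsingleton.elim _ (obj_subsingleton k F y x hx p hc) u 0
    rw [hu, map_zero]
    rfl


noncomputable def eta0 (y y' : Y) (x : X) (hx : x ∈ F y) (x' : X) (hx' : x' ∈ F y')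
    (hxx : x' ≤ x) (hyy : y' ≤ y) :
    ((push k F y).obj (Pfun k (FyP F y) ⟨x, hx⟩)) ⟶
      ((push k F y').obj (Pfun k (FyP F y') ⟨x', hx'⟩)) where
  app p := ModuleCat.ofHom
    { toFun := fun u h1 _ =>
        if hxa : x ≤ p.1.1 then u ⟨h1.down.trans hyy⟩ ⟨hxa⟩ else 0
      map_add' := by
        intro u v
        funext h1 h2
        show (if hxa : x ≤ p.1.1 then (u + v) ⟨h1.down.trans hyy⟩ ⟨hxa⟩ else 0) =
          (if hxa : x ≤ p.1.1 then u ⟨h1.down.trans hyy⟩ ⟨hxa⟩ else 0) +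
          (if hxa : x ≤ p.1.1 then v ⟨h1.down.trans hyy⟩ ⟨hxa⟩ else 0)
        by_cases hxa : x ≤ p.1.1
        · rw [dif_pos hxa, dif_pos hxa, dif_pos hxa]; rfl
        · rw [dif_neg hxa, dif_neg hxa, dif_neg hxa, add_zero]
      map_smul' := by
        intro c u
        funext h1 h2
        show (if hxa : x ≤ p.1.1 then (c • u) ⟨h1.down.trans hyy⟩ ⟨hxa⟩ else 0) =
          c * (if hxa : x ≤ p.1.1 then u ⟨h1.down.trans hyy⟩ ⟨hxa⟩ else 0)
        by_cases hxa : x ≤ p.1.1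
        · rw [dif_pos hxa, dif_pos hxa]; rfl
        · rw [dif_neg hxa, dif_neg hxa, mul_zero] }
  naturality := by
    intro p q f
    apply ModuleCat.hom_ext; apply LinearMap.ext
    intro u
    funext h1 h2
    show (if hq : x ≤ q.1.1 then
        (if hs : (⟨x, hx⟩ : FyP F y) ≤
            ⟨p.1.1, mem_of_le F ((leOfHom f).2.trans (h1.down.trans hyy))⟩ then
          u ⟨(leOfHom f).2.trans (h1.down.trans hyy)⟩ ⟨hs⟩ else 0) else 0) =
      (if hs' : (⟨x', hx'⟩ : FyP F y') ≤
          ⟨p.1.1, mem_of_le F ((leOfHom f).2.trans h1.down)⟩ then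
        (if hp : x ≤ p.1.1 then
          u ⟨((leOfHom f).2.trans h1.down).trans hyy⟩ ⟨hp⟩ else 0) else 0)
    by_cases hp : x ≤ p.1.1
    · rw [dif_pos (show x ≤ q.1.1 from hp.trans (leOfHom f).1),
        dif_pos (show (⟨x, hx⟩ : FyP F y) ≤
          ⟨p.1.1, mem_of_le F ((leOfHom f).2.trans (h1.down.trans hyy))⟩ from hp),
        dif_pos (show (⟨x', hx'⟩ : FyP F y') ≤
          ⟨p.1.1, mem_of_le F ((leOfHom f).2.trans h1.down)⟩ from hxx.trans hp),
        dif_pos hp]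
    · rw [dif_neg hp,
        dif_neg (show ¬ (⟨x, hx⟩ : FyP F y) ≤
          ⟨p.1.1, mem_of_le F ((leOfHom f).2.trans (h1.down.trans hyy))⟩ from
            fun hc => hp hc)]
      simp


lemma eta_eq (y y' : Y) (x : X) (hx : x ∈ F y) (x' : X) (hx' : x' ∈ F y')
    (hxx : x' ≤ x) (hyy : y' ≤ y) (hxy' : x ∈ F y')
    (η : ((push k F y).obj (Pfun k (FyP F y) ⟨x, hx⟩)) ⟶
      ((push k F y').obj (Pfun k (FyP F y') ⟨x', hx'⟩))) :
    η = (η.app ⟨(x, y'), hxy'⟩ (gen k F y x hx ⟨(x, y'), hxy'⟩) ⟨le_rfl⟩ ⟨hxx⟩) •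
      eta0 k F y y' x hx x' hx' hxx hyy := by
  set c : k := η.app ⟨(x, y'), hxy'⟩ (gen k F y x hx ⟨(x, y'), hxy'⟩) ⟨le_rfl⟩ ⟨hxx⟩ with hc
  apply NatTrans.ext
  funext p
  apply ModuleCat.hom_ext; apply LinearMap.ext
  intro u
  funext h1 h2
  show η.app p u h1 h2 =
    c * (if hxa : x ≤ p.1.1 then u ⟨h1.down.trans hyy⟩ ⟨hxa⟩ else 0)
  by_cases hcc : x ≤ p.1.1 ∧ p.1.2 ≤ y
  · obtain ⟨hxa, hby⟩ := hcc
    rw [eq_smul_gen k F y x hx p hxa hby u, map_smul]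
    show u ⟨hby⟩ ⟨hxa⟩ * η.app p (gen k F y x hx p) h1 h2 =
      c * (if hxa' : x ≤ p.1.1 then
        (u ⟨hby⟩ ⟨hxa⟩ • gen k F y x hx p) ⟨h1.down.trans hyy⟩ ⟨hxa'⟩ else 0)
    rw [gen_val_step k F y y' x hx x' hx' η p hxa h1 h2, dif_pos hxx,
      gen_val_to_g k F y y' x hx x' hx' η p.1.2 ((F p.1.2).lower hxa p.2) h1.down hxy' hxx,
      dif_pos hxa]
    show u ⟨hby⟩ ⟨hxa⟩ * c = c * (u ⟨hby⟩ ⟨hxa⟩ * 1)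
    rw [mul_one, mul_comm]
  · have hu : u = 0 := @Subsingleton.elim _ (obj_subsingleton k F y x hx p hcc) u 0
    rw [hu, map_zero]
    show (0 : k) = c * (if hxa : x ≤ p.1.1 then (0 : k) else 0)
    simp

theorem statement7' (y y' : Y)
    (x : X) (hx : x ∈ F y) (x' : X) (hx' : x' ∈ F y') :
    (x' ≤ x ∧ y' ≤ y ∧ x ∈ F y' →
      Nonempty ((((push k F y).obj (Pfun k (FyP F y) ⟨x, hx⟩)) ⟶
        ((push k F y').obj (Pfun k (FyP F y') ⟨x', hx'⟩))) ≃ₗ[k] k)) ∧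
    (¬(x' ≤ x ∧ y' ≤ y ∧ x ∈ F y') →
      Subsingleton (((push k F y).obj (Pfun k (FyP F y) ⟨x, hx⟩)) ⟶
        ((push k F y').obj (Pfun k (FyP F y') ⟨x', hx'⟩)))) := by
  constructor
  · rintro ⟨hxx, hyy, hxy'⟩
    refine ⟨{
      toFun := fun η => η.app ⟨(x, y'), hxy'⟩ (gen k F y x hx ⟨(x, y'), hxy'⟩) ⟨le_rfl⟩ ⟨hxx⟩
      map_add' := fun η ζ => rfl
      map_smul' := fun c η => rfl
      invFun := fun c => c • eta0 k F y y' x hx x' hx' hxx hyy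
      left_inv := fun η => (eta_eq k F y y' x hx x' hx' hxx hyy hxy' η).symm
      right_inv := fun c => ?_ }⟩
    show c * (if hxa : x ≤ x then (1 : k) else 0) = c
    rw [dif_pos le_rfl, mul_one]
  · intro hbad
    constructor
    intro η ζ
    apply NatTrans.ext
    funext p
    apply ModuleCat.hom_ext; apply LinearMap.ext
    intro u
    funext h1 h2
    exact (vanish k F y y' x hx x' hx' hbad η p u h1 h2).trans
      (vanish k F y y' x hx x' hx' hbad ζ p u h1 h2).symm

end Statement7Proof

/-- The `k`-module `Hom_{F_{Γ,k}}((i_y)⋆(P_x), (i_{y'})⋆(P_{x'}))` is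
isomorphic to `k` if `x' ≤ x`, `y' ≤ y` and `x ∈ F(y')`, and is zero otherwise. -/
theorem statement7 (k : Type) [CommRing k] (X Y : Type) [PartialOrder X] [Fintype X]
    [PartialOrder Y] [Fintype Y] (F : Y →o LowerSet X) (y y' : Y)
    (x : X) (hx : x ∈ F y) (x' : X) (hx' : x' ∈ F y') :
    (x' ≤ x ∧ y' ≤ y ∧ x ∈ F y' →
      Nonempty ((((push k F y).obj (Pfun k (FyP F y) ⟨x, hx⟩)) ⟶
        ((push k F y').obj (Pfun k (FyP F y') ⟨x', hx'⟩))) ≃ₗ[k] k)) ∧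
    (¬(x' ≤ x ∧ y' ≤ y ∧ x ∈ F y') →
      Subsingleton (((push k F y).obj (Pfun k (FyP F y) ⟨x, hx⟩)) ⟶
        ((push k F y').obj (Pfun k (FyP F y') ⟨x', hx'⟩)))) := by
  exact statement7' k F y y' x hx x' hx'

end PaperInterval
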